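/- Let Γ be a profinite group, and let ρ₁ : Γ → G₁, ρ₂ : Γ → G₂ be continuous surjective homomorphisms onto profinite groups. Suppose no finite simple group is simultaneously a continuous quotient of G₁ and a continuous quotient of G₂. Then the map (ρ₁, ρ₂) : Γ → G₁ × G₂ is surjective. -/

import Mathlib

universe u

/-- Every nontrivial finite group has a finite simple quotient (living in `Type 0`). -/
lemma exists_simple_quotient_aux : ∀ (n : ℕ) (C : Type u) [Group C] [Finite C]
    [Nontrivial C], Nat.card C ≤ n →
    ∃ (S : Type) (_ : Group S) (_ : Finite S), IsSimpleGroup S ∧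
      ∃ g : C →* S, Function.Surjective g := by
  intro n
  induction n with
  | zero =>
    intro C _ _ _ h
    have : 0 < Nat.card C := Nat.card_pos
    omega
  | succ n ih =>
    intro C _ _ _ hcard
    by_cases hs : IsSimpleGroup C
    · -- transfer `C` to `Type 0`
      haveI : Small.{0} C := small_of_injective (Finite.equivFin C).injective
      let me : Shrink.{0} C ≃* C := Shrink.mulEquiv
      haveI : Finite (Shrink.{0} C) := Finite.of_equiv C me.symm.toEquiv
      haveI : Nontrivial (Shrink.{0} C) := me.toEquiv.nontrivial
      haveI : IsSimpleGroup (Shrink.{0} C) :=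
        IsSimpleGroup.isSimpleGroup_of_surjective me.symm.toMonoidHom me.symm.surjective
      exact ⟨Shrink.{0} C, inferInstance, inferInstance, inferInstance,
        me.symm.toMonoidHom, me.symm.surjective⟩
    · obtain ⟨M, hMnorm, hM⟩ : ∃ M : Subgroup C, M.Normal ∧ ¬(M = ⊥ ∨ M = ⊤) := by
        by_contra h
        push_neg at h
        exact hs { toNontrivial := inferInstance,
                   eq_bot_or_eq_top_of_normal := fun M hMn => h M hMn }
      obtain ⟨hMbot, hMtop⟩ := not_or.mp hM
      haveI := hMnorm
      have h1 : Nat.card C = Nat.card (C ⧸ M) * Nat.card M :=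
        Subgroup.card_eq_card_quotient_mul_card_subgroup M
      have h2 : 1 < Nat.card M := (Subgroup.one_lt_card_iff_ne_bot M).mpr hMbot
      have h3 : 0 < Nat.card (C ⧸ M) := Nat.card_pos
      have hlt : Nat.card (C ⧸ M) < Nat.card C := by
        rw [h1]
        exact (Nat.lt_mul_iff_one_lt_right h3).mpr h2
      have hne1 : Nat.card (C ⧸ M) ≠ 1 := by
        intro h
        exact hMtop (Subgroup.index_eq_one.mp (by rw [Subgroup.index_eq_card, h]))
      haveI : Nontrivial (C ⧸ M) := Finite.one_lt_card_iff_nontrivial.mp (by omega)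
      obtain ⟨S, iS, fS, hSsimple, g, hg⟩ := ih (C ⧸ M) (by omega)
      exact ⟨S, iS, fS, hSsimple, g.comp (QuotientGroup.mk' M),
        hg.comp (QuotientGroup.mk'_surjective M)⟩

/-- Case |I| = 2 of Serre's Lemma 2: if no finite simple group is a common continuous
quotient of `G₁` and `G₂`, then `(ρ₁, ρ₂)` is surjective. -/
theorem stmt_3 {Γ G₁ G₂ : Type*} [Group Γ] [TopologicalSpace Γ] [IsTopologicalGroup Γ]
    [CompactSpace Γ] [T2Space Γ] [TotallyDisconnectedSpace Γ]
    [Group G₁] [TopologicalSpace G₁] [IsTopologicalGroup G₁]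
    [CompactSpace G₁] [T2Space G₁] [TotallyDisconnectedSpace G₁]
    [Group G₂] [TopologicalSpace G₂] [IsTopologicalGroup G₂]
    [CompactSpace G₂] [T2Space G₂] [TotallyDisconnectedSpace G₂]
    (ρ₁ : Γ →* G₁) (ρ₂ : Γ →* G₂) (h₁ : Continuous ρ₁) (h₂ : Continuous ρ₂)
    (hs₁ : Function.Surjective ρ₁) (hs₂ : Function.Surjective ρ₂)
    (hD : ¬ ∃ (S : Type) (_ : Group S) (_ : Finite S), IsSimpleGroup S ∧
      (∃ f₁ : G₁ →* S, Function.Surjective f₁ ∧ IsOpen (f₁.ker : Set G₁)) ∧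
      (∃ f₂ : G₂ →* S, Function.Surjective f₂ ∧ IsOpen (f₂.ker : Set G₂))) :
    Function.Surjective (fun γ => (ρ₁ γ, ρ₂ γ) : Γ → G₁ × G₂) := by
  classical
  set ρ : Γ →* G₁ × G₂ := ρ₁.prod ρ₂ with hρdef
  suffices hsur : Function.Surjective ρ by exact hsur
  by_contra hns
  have hρcont : Continuous ρ := h₁.prodMk h₂
  obtain ⟨x, hx⟩ : ∃ x : G₁ × G₂, x ∉ ρ.range := by
    rw [Function.Surjective] at hns
    push_neg at hns
    obtain ⟨x, hx⟩ := hns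
    exact ⟨x, fun ⟨γ, hγ⟩ => hx γ hγ⟩
  have hHclosed : IsClosed ((ρ.range : Subgroup (G₁ × G₂)) : Set (G₁ × G₂)) := by
    have : ((ρ.range : Subgroup (G₁ × G₂)) : Set (G₁ × G₂)) = Set.range ρ := rfl
    rw [this]
    exact (isCompact_range hρcont).isClosed
  -- find an open normal subgroup N with x * N disjoint from the range
  have hUopen : IsOpen ((fun g => x * g) ⁻¹' ((ρ.range : Set (G₁ × G₂))ᶜ)) :=
    hHclosed.isOpen_compl.preimage (continuous_mul_left x)
  have h1U : (1 : G₁ × G₂) ∈ (fun g => x * g) ⁻¹' ((ρ.range : Set (G₁ × G₂))ᶜ) := by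
    simpa using hx
  obtain ⟨V, hVclopen, h1V, hVU⟩ := compact_exists_isClopen_in_isOpen hUopen h1U
  obtain ⟨N, hN⟩ :=
    IsTopologicalGroup.exist_openNormalSubgroup_sub_clopen_nhds_of_one hVclopen h1V
  have hNx : ∀ g ∈ N.toSubgroup, x * g ∉ ρ.range := fun g hg => hVU (hN hg)
  -- the two coordinate open normal subgroups
  set N₁ : Subgroup G₁ := N.toSubgroup.comap (MonoidHom.inl G₁ G₂) with hN₁def
  set N₂ : Subgroup G₂ := N.toSubgroup.comap (MonoidHom.inr G₁ G₂) with hN₂def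
  have hN₁open : IsOpen (N₁ : Set G₁) :=
    N.toOpenSubgroup.isOpen.preimage (continuous_id.prodMk continuous_const)
  have hN₂open : IsOpen (N₂ : Set G₂) :=
    N.toOpenSubgroup.isOpen.preimage (continuous_const.prodMk continuous_id)
  haveI hN₁norm : N₁.Normal := N.isNormal'.comap _
  haveI hN₂norm : N₂.Normal := N.isNormal'.comap _
  haveI : Finite (G₁ ⧸ N₁) := N₁.quotient_finite_of_isOpen hN₁open
  haveI : Finite (G₂ ⧸ N₂) := N₂.quotient_finite_of_isOpen hN₂open
  have hprodle : N₁.prod N₂ ≤ N.toSubgroup := by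
    intro p hp
    obtain ⟨ha, hb⟩ := Subgroup.mem_prod.mp hp
    have hrw : p = (p.1, (1 : G₂)) * ((1 : G₁), p.2) := by
      ext <;> simp
    rw [hrw]
    exact mul_mem ha hb
  -- pass to the finite quotient
  set π : G₁ × G₂ →* (G₁ ⧸ N₁) × (G₂ ⧸ N₂) :=
    (QuotientGroup.mk' N₁).prodMap (QuotientGroup.mk' N₂) with hπdef
  set I : Subgroup ((G₁ ⧸ N₁) × (G₂ ⧸ N₂)) := ρ.range.map π with hIdef
  have hxI : π x ∉ I := by
    rintro ⟨y, hy, hyx⟩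
    have hc1 : (QuotientGroup.mk' N₁) y.1 = (QuotientGroup.mk' N₁) x.1 :=
      congrArg Prod.fst hyx
    have hc2 : (QuotientGroup.mk' N₂) y.2 = (QuotientGroup.mk' N₂) x.2 :=
      congrArg Prod.snd hyx
    have hm1 : y.1⁻¹ * x.1 ∈ N₁ := (QuotientGroup.eq ).mp hc1
    have hm2 : y.2⁻¹ * x.2 ∈ N₂ := (QuotientGroup.eq ).mp hc2
    have hn : y⁻¹ * x ∈ N.toSubgroup := hprodle (Subgroup.mem_prod.mpr ⟨hm1, hm2⟩)
    have hinv : (y⁻¹ * x)⁻¹ ∈ N.toSubgroup := inv_mem hn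
    apply hNx _ hinv
    have : x * (y⁻¹ * x)⁻¹ = y := by group
    rw [this]
    exact hy
  have hI₁ : Function.Surjective (Prod.fst ∘ I.subtype) := by
    intro q
    obtain ⟨g, rfl⟩ := QuotientGroup.mk'_surjective N₁ q
    obtain ⟨γ, hγ⟩ := hs₁ g
    refine ⟨⟨π (ρ γ), Subgroup.mem_map_of_mem π ⟨γ, rfl⟩⟩, ?_⟩
    show (QuotientGroup.mk' N₁) (ρ₁ γ) = (QuotientGroup.mk' N₁) g
    rw [hγ]
  have hI₂ : Function.Surjective (Prod.snd ∘ I.subtype) := by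
    intro q
    obtain ⟨g, rfl⟩ := QuotientGroup.mk'_surjective N₂ q
    obtain ⟨γ, hγ⟩ := hs₂ g
    refine ⟨⟨π (ρ γ), Subgroup.mem_map_of_mem π ⟨γ, rfl⟩⟩, ?_⟩
    show (QuotientGroup.mk' N₂) (ρ₂ γ) = (QuotientGroup.mk' N₂) g
    rw [hγ]
  haveI hAnorm : I.goursatFst.Normal := Subgroup.normal_goursatFst hI₁
  haveI hBnorm : I.goursatSnd.Normal := Subgroup.normal_goursatSnd hI₂
  obtain ⟨e, he⟩ := Subgroup.goursat_surjective hI₁ hI₂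
  -- not both Goursat subgroups are ⊤
  have hAB : I.goursatFst ≠ ⊤ ∨ I.goursatSnd ≠ ⊤ := by
    by_contra h
    push_neg at h
    obtain ⟨hA', hB'⟩ := h
    apply hxI
    obtain ⟨⟨i, hi⟩, hfst⟩ := hI₁ (π x).1
    have hx1 : i.1 = (π x).1 := hfst
    have hb : ((1 : G₁ ⧸ N₁), i.2⁻¹ * (π x).2) ∈ I :=
      Subgroup.mem_goursatSnd.mp (by rw [hB']; trivial)
    have hrw : π x = i * ((1 : G₁ ⧸ N₁), i.2⁻¹ * (π x).2) :=
      Prod.ext (by simp [hx1]) (by simp)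
    rw [hrw]
    exact mul_mem hi hb
  -- the common finite quotient
  set C := (G₁ ⧸ N₁) ⧸ I.goursatFst with hCdef
  haveI : Finite C := Finite.of_surjective _ (QuotientGroup.mk'_surjective I.goursatFst)
  haveI : Finite ((G₂ ⧸ N₂) ⧸ I.goursatSnd) :=
    Finite.of_surjective _ (QuotientGroup.mk'_surjective I.goursatSnd)
  haveI hCnontriv : Nontrivial C := by
    rcases hAB with h | h
    · obtain ⟨a, ha⟩ : ∃ a, a ∉ I.goursatFst := by
        by_contra hcon
        push_neg at hcon
        exact h ((Subgroup.eq_top_iff' _).mpr hcon)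
      exact ⟨⟨(a : C), 1, fun hcon => ha ((QuotientGroup.eq_one_iff a).mp hcon)⟩⟩
    · obtain ⟨a, ha⟩ : ∃ a, a ∉ I.goursatSnd := by
        by_contra hcon
        push_neg at hcon
        exact h ((Subgroup.eq_top_iff' _).mpr hcon)
      haveI : Nontrivial ((G₂ ⧸ N₂) ⧸ I.goursatSnd) :=
        ⟨⟨(a : (G₂ ⧸ N₂) ⧸ I.goursatSnd), 1,
          fun hcon => ha ((QuotientGroup.eq_one_iff a).mp hcon)⟩⟩
      exact e.toEquiv.nontrivial
  obtain ⟨S, iS, fS, hSsimple, g, hg⟩ := exists_simple_quotient_aux (Nat.card C) C le_rfl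
  -- the two surjections onto S with open kernels
  set f₁ : G₁ →* S :=
    g.comp ((QuotientGroup.mk' I.goursatFst).comp (QuotientGroup.mk' N₁)) with hf₁def
  set f₂ : G₂ →* S :=
    g.comp (e.symm.toMonoidHom.comp
      ((QuotientGroup.mk' I.goursatSnd).comp (QuotientGroup.mk' N₂))) with hf₂def
  have hf₁s : Function.Surjective f₁ :=
    hg.comp ((QuotientGroup.mk'_surjective _).comp (QuotientGroup.mk'_surjective _))
  have hf₂s : Function.Surjective f₂ :=
    hg.comp (e.symm.surjective.comp
      ((QuotientGroup.mk'_surjective _).comp (QuotientGroup.mk'_surjective _)))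
  have hker₁ : IsOpen (f₁.ker : Set G₁) := by
    refine Subgroup.isOpen_mono (H₁ := N₁) ?_ hN₁open
    intro a ha
    have h1 : (QuotientGroup.mk' N₁) a = 1 := (QuotientGroup.eq_one_iff a).mpr ha
    have hfa : f₁ a = 1 := by
      show g ((QuotientGroup.mk' I.goursatFst) ((QuotientGroup.mk' N₁) a)) = 1
      rw [h1, map_one, map_one]
    simpa [MonoidHom.mem_ker] using hfa
  have hker₂ : IsOpen (f₂.ker : Set G₂) := by
    refine Subgroup.isOpen_mono (H₁ := N₂) ?_ hN₂open
    intro a ha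
    have h1 : (QuotientGroup.mk' N₂) a = 1 := (QuotientGroup.eq_one_iff a).mpr ha
    have hfa : f₂ a = 1 := by
      show g (e.symm ((QuotientGroup.mk' I.goursatSnd) ((QuotientGroup.mk' N₂) a))) = 1
      rw [h1, map_one, map_one, map_one]
    simpa [MonoidHom.mem_ker] using hfa
  exact hD ⟨S, iS, fS, hSsimple, ⟨f₁, hf₁s, hker₁⟩, ⟨f₂, hf₂s, hker₂⟩⟩
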